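/- Let f : 𝕆 → 𝕆 be left para-linear and r ∈ 𝕆. Define (f ⊙ r)(x) := f(x)·r − (f(rx) − r f(x)). Then f ⊙ r is again left para-linear. -/

import Mathlib

noncomputable section

open Quaternion

/-- The octonions, as the Cayley–Dickson double of the quaternions. -/
def Octo : Type := ℍ × ℍ

namespace Octo

instance : AddCommGroup Octo := inferInstanceAs (AddCommGroup (ℍ × ℍ))
instance : Module ℝ Octo := inferInstanceAs (Module ℝ (ℍ × ℍ))

/-- Cayley–Dickson multiplication: (a,b)(c,d) = (ac − d̄b, da + bc̄). -/
instance : Mul Octo :=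
  ⟨fun x y => ((x.1 * y.1 - star y.2 * x.2, y.2 * x.1 + x.2 * star y.1) : ℍ × ℍ)⟩

/-- Octonionic conjugation. -/
def conj (x : Octo) : Octo := ((star x.1, -x.2) : ℍ × ℍ)

/-- Real part. -/
def re (x : Octo) : ℝ := x.1.re

/-- Squared norm. -/
def normSq (x : Octo) : ℝ := re (x * conj x)

/-- The standard basis e₀ = 1, e₁, …, e₇. -/
def e : Fin 8 → Octo :=
  ![((1, 0) : ℍ × ℍ), ((⟨0,1,0,0⟩, 0) : ℍ × ℍ), ((⟨0,0,1,0⟩, 0) : ℍ × ℍ),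
    ((⟨0,0,0,1⟩, 0) : ℍ × ℍ), ((0, 1) : ℍ × ℍ), ((0, ⟨0,1,0,0⟩) : ℍ × ℍ),
    ((0, ⟨0,0,1,0⟩) : ℍ × ℍ), ((0, ⟨0,0,0,1⟩) : ℍ × ℍ)]

/-- Inverse: p⁻¹ = conj p / |p|². -/
def inv (x : Octo) : Octo := (normSq x)⁻¹ • conj x

/-- The associator [a,b,c] = (ab)c − a(bc). -/
def assoc (a b c : Octo) : Octo := a * b * c - a * (b * c)

/-- Left para-linear map: ℝ-linear with Re(f(px) − p f(x)) = 0. -/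
def IsParaLinear (f : Octo → Octo) : Prop :=
  IsLinearMap ℝ f ∧ ∀ p x : Octo, re (f (p * x) - p * f x) = 0

end Octo

namespace OctoAux

open Octo

lemma mul_def (x y : Octo) :
    x * y = ((x.1 * y.1 - star y.2 * x.2, y.2 * x.1 + x.2 * star y.1) : ℍ × ℍ) := rfl

lemma fst_add (x y : Octo) : (x + y).1 = x.1 + y.1 := rfl
lemma snd_add (x y : Octo) : (x + y).2 = x.2 + y.2 := rfl
lemma fst_sub (x y : Octo) : (x - y).1 = x.1 - y.1 := rfl
lemma snd_sub (x y : Octo) : (x - y).2 = x.2 - y.2 := rfl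
lemma fst_smul (s : ℝ) (x : Octo) : (s • x).1 = s • x.1 := rfl
lemma snd_smul (s : ℝ) (x : Octo) : (s • x).2 = s • x.2 := rfl

lemma re_sub (x y : Octo) : re (x - y) = re x - re y := by
  simp [Octo.re, fst_sub]

lemma re_add (x y : Octo) : re (x + y) = re x + re y := by
  simp [Octo.re, fst_add]

lemma add_mul' (a b c : Octo) : (a + b) * c = a * c + b * c := by
  refine Prod.ext ?_ ?_ <;>
    simp [fst_add, snd_add] <;> simp [mul_def, fst_add, snd_add, add_mul, mul_add] <;> abel

lemma mul_add' (a b c : Octo) : a * (b + c) = a * b + a * c := by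
  refine Prod.ext ?_ ?_ <;>
    simp [fst_add, snd_add] <;> simp [mul_def, fst_add, snd_add, add_mul, mul_add, star_add] <;> abel

lemma mul_sub' (a b c : Octo) : a * (b - c) = a * b - a * c := by
  refine Prod.ext ?_ ?_ <;>
    simp [fst_sub, snd_sub] <;> simp [mul_def, fst_sub, snd_sub, sub_mul, mul_sub, star_sub] <;> abel

lemma smul_mul' (s : ℝ) (a b : Octo) : (s • a) * b = s • (a * b) := by
  refine Prod.ext ?_ ?_ <;>
    simp [fst_smul, snd_smul] <;> simp [mul_def, fst_smul, snd_smul, smul_sub, smul_add, smul_mul_assoc, mul_smul_comm]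

lemma mul_smul' (s : ℝ) (a b : Octo) : a * (s • b) = s • (a * b) := by
  refine Prod.ext ?_ ?_ <;>
    simp [fst_smul, snd_smul] <;> simp [mul_def, fst_smul, snd_smul, smul_sub, smul_add, smul_mul_assoc, mul_smul_comm]

lemma re_mul_comm (a b : Octo) : re (a * b) = re (b * a) := by
  repeat rw [mul_def]
  simp [Octo.re, mul_def, Quaternion.re_mul, Quaternion.re_star, Quaternion.imI_star,
    Quaternion.imJ_star, Quaternion.imK_star]; ring

lemma re_mul_assoc (a b c : Octo) : re (a * b * c) = re (a * (b * c)) := by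
  repeat rw [mul_def]
  simp [Octo.re, mul_def, Quaternion.re_mul, Quaternion.imI_mul, Quaternion.imJ_mul,
    Quaternion.imK_mul, Quaternion.re_star, Quaternion.imI_star,
    Quaternion.imJ_star, Quaternion.imK_star]; ring

set_option maxHeartbeats 2000000 in
lemma alt (r p x : Octo) : r * (p * x) + p * (r * x) = r * p * x + p * r * x := by
  refine Prod.ext ?_ ?_ <;> simp only [fst_add, snd_add] <;> (repeat rw [mul_def]) <;>
  obtain ⟨a, b⟩ := r <;> obtain ⟨c, d⟩ := p <;> obtain ⟨u, v⟩ := x <;>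
    simp only [mul_def, fst_add, snd_add, star_sub, star_add, star_mul, star_star, sub_mul,
      mul_sub, add_mul, mul_add] <;>
  · apply Quaternion.ext <;>
      simp only [Quaternion.re_add, Quaternion.imI_add, Quaternion.imJ_add, Quaternion.imK_add,
        Quaternion.re_sub, Quaternion.imI_sub, Quaternion.imJ_sub, Quaternion.imK_sub,
        Quaternion.re_mul, Quaternion.imI_mul, Quaternion.imJ_mul, Quaternion.imK_mul,
        Quaternion.re_star, Quaternion.imI_star, Quaternion.imJ_star, Quaternion.imK_star] <;>
      ring

/-- Restated para-linearity: `re (f (p * x)) = re (p * f x)`. -/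
lemma para_eq {f : Octo → Octo} (hf : Octo.IsParaLinear f) (p x : Octo) :
    re (f (p * x)) = re (p * f x) := by
  have := hf.2 p x
  rw [re_sub] at this
  linarith

end OctoAux

theorem stmt15 (f : Octo → Octo) (hf : Octo.IsParaLinear f) (r : Octo) :
    Octo.IsParaLinear (fun x => f x * r - (f (r * x) - r * f x)) :=  by
  classical
  obtain ⟨hlin, hpara⟩ := hf
  constructor
  · constructor
    · intro x y
      simp only [hlin.map_add, OctoAux.mul_add', OctoAux.add_mul']
      abel
    · intro s x
      simp only [hlin.map_smul, OctoAux.mul_smul', OctoAux.smul_mul', smul_sub]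
  · intro p x
    have key : Octo.re (f (r * (p * x))) + Octo.re (f (p * (r * x)))
        = Octo.re (f (r * p * x)) + Octo.re (f (p * r * x)) := by
      rw [← OctoAux.re_add, ← OctoAux.re_add, ← hlin.map_add, ← hlin.map_add, OctoAux.alt r p x]
    have h1 : Octo.re (f (p * x) * r) = Octo.re (f (r * (p * x))) := by
      rw [OctoAux.re_mul_comm, ← OctoAux.para_eq ⟨hlin, hpara⟩ r (p * x)]
    have h2 : Octo.re (r * f (p * x)) = Octo.re (f (r * (p * x))) :=
      (OctoAux.para_eq ⟨hlin, hpara⟩ r (p * x)).symm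
    have h3 : Octo.re (p * (f x * r)) = Octo.re (f (r * p * x)) := by
      rw [← OctoAux.re_mul_assoc, OctoAux.re_mul_comm, ← OctoAux.re_mul_assoc,
        ← OctoAux.para_eq ⟨hlin, hpara⟩ (r * p) x]
    have h4 : Octo.re (p * f (r * x)) = Octo.re (f (p * (r * x))) :=
      (OctoAux.para_eq ⟨hlin, hpara⟩ p (r * x)).symm
    have h5 : Octo.re (p * (r * f x)) = Octo.re (f (p * r * x)) := by
      rw [← OctoAux.re_mul_assoc, ← OctoAux.para_eq ⟨hlin, hpara⟩ (p * r) x]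
    simp only [OctoAux.mul_sub', OctoAux.re_sub]
    rw [h1, h2, h3, h4, h5]
    linarith
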